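/- arXiv:1312.3008 — 4 statements merged into one kernel-verified Lean document; each statement's English description precedes it below -/
import Mathlib

section
/- The total number of balls is conserved under the UD-pTL: if Σ_{i=1}^{g+1} J_i < Σ_{i=1}^{g+1} W_i, then Σ_{i=1}^{g+1} J̄_i = Σ_{i=1}^{g+1} J_i; i.e., C_0 := Σ_{i=1}^{g+1} J_i is a conserved quantity of the UD-pTL. -/
open Fin.NatCast in
/-- `X_i = max_{0 ≤ k ≤ g} Σ_{l=1}^{k} (J_{i-l} - W_{i-l})`, indices cyclic mod `g+1`. -/
noncomputable def udX (g : ℕ) (J W : Fin (g + 1) → ℝ) (i : Fin (g + 1)) : ℝ :=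
  (Finset.range (g + 1)).sup' ⟨0, Finset.mem_range.mpr (Nat.succ_pos g)⟩
    (fun k => ∑ l ∈ Finset.Icc 1 k, (J (i - (l : Fin (g + 1))) - W (i - (l : Fin (g + 1)))))

/-- `J̄_i = min(W_i, X_i + J_i)`. -/
noncomputable def udJbar (g : ℕ) (J W : Fin (g + 1) → ℝ) (i : Fin (g + 1)) : ℝ :=
  min (W i) (udX g J W i + J i)

/-- `W̄_i = J_{i+1} + W_i - J̄_i`. -/
noncomputable def udWbar (g : ℕ) (J W : Fin (g + 1) → ℝ) (i : Fin (g + 1)) : ℝ :=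
  J (i + 1) + W i - udJbar g J W i

/-- Peel the bottom element off a `sup'` over `range (n+1)`. -/
lemma sup'_range_succ_bot (n : ℕ) (hn : 0 < n) (f : ℕ → ℝ) :
    (Finset.range (n + 1)).sup' ⟨0, Finset.mem_range.mpr (Nat.succ_pos n)⟩ f
      = max (f 0) ((Finset.range n).sup' ⟨0, Finset.mem_range.mpr hn⟩ (fun k => f (k + 1))) := by
  apply le_antisymm
  · apply Finset.sup'_le
    intro k hk
    cases k with
    | zero => exact le_max_left _ _
    | succ m =>
      refine le_trans ?_ (le_max_right _ _)
      exact Finset.le_sup' (fun k => f (k + 1))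
        (Finset.mem_range.mpr (by have := Finset.mem_range.mp hk; omega))
  · apply max_le
    · exact Finset.le_sup' _ (Finset.mem_range.mpr (Nat.succ_pos n))
    · apply Finset.sup'_le
      intro m hm
      exact Finset.le_sup' f (Finset.mem_range.mpr (by have := Finset.mem_range.mp hm; omega))

/-- Peel the top element off a `sup'` over `range (n+1)`. -/
lemma sup'_range_succ_top (n : ℕ) (hn : 0 < n) (f : ℕ → ℝ) :
    (Finset.range (n + 1)).sup' ⟨0, Finset.mem_range.mpr (Nat.succ_pos n)⟩ f
      = max (f n) ((Finset.range n).sup' ⟨0, Finset.mem_range.mpr hn⟩ f) := by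
  apply le_antisymm
  · apply Finset.sup'_le
    intro k hk
    rcases eq_or_lt_of_le (Nat.lt_succ_iff.mp (Finset.mem_range.mp hk)) with rfl | hlt
    · exact le_max_left _ _
    · exact le_trans (Finset.le_sup' f (Finset.mem_range.mpr hlt)) (le_max_right _ _)
  · apply max_le
    · exact Finset.le_sup' f (Finset.mem_range.mpr (Nat.lt_succ_self n))
    · exact Finset.sup'_le _ _ fun m hm =>
        Finset.le_sup' f (Finset.mem_range.mpr (by have := Finset.mem_range.mp hm; omega))

/-- A constant can be pulled out of a `sup'` over ℝ. -/
lemma add_sup'_real {s : Finset ℕ} (hs : s.Nonempty) (f : ℕ → ℝ) (c : ℝ) :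
    s.sup' hs (fun k => c + f k) = c + s.sup' hs f := by
  apply le_antisymm
  · apply Finset.sup'_le
    intro k hk
    have := Finset.le_sup' f hk
    linarith
  · obtain ⟨k, hk, hfk⟩ := Finset.exists_mem_eq_sup' hs f
    have := Finset.le_sup' (fun k => c + f k) hk
    linarith

open Fin.NatCast Fin.CommRing in
lemma udX_succ (g : ℕ) (hg : 1 ≤ g) (J W : Fin (g + 1) → ℝ)
    (h : ∑ i, J i < ∑ i, W i) (i : Fin (g + 1)) :
    udX g J W (i + 1) = max 0 (udX g J W i + (J i - W i)) := by
  set d : Fin (g + 1) → ℝ := fun j => J j - W j with hd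
  set S : Fin (g + 1) → ℕ → ℝ :=
    fun j k => ∑ l ∈ Finset.Icc 1 k, (J (j - (l : Fin (g + 1))) - W (j - (l : Fin (g + 1)))) with hS
  have hSrange : ∀ (j : Fin (g + 1)) (k : ℕ),
      S j k = ∑ l ∈ Finset.range k, d (j - ((1 + l : ℕ) : Fin (g + 1))) := by
    intro j k
    rw [hS]
    simp only
    rw [← Finset.Ico_add_one_right_eq_Icc, Finset.sum_Ico_eq_sum_range]
    simp [hd]
  have hD : (∑ j, d j) < 0 := by
    have : (∑ j, d j) = (∑ i, J i) - (∑ i, W i) := Finset.sum_sub_distrib _ _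
    linarith
  -- recurrence for S
  have hSstep : ∀ (j : Fin (g + 1)) (k : ℕ), S (j + 1) (k + 1) = d j + S j k := by
    intro j k
    rw [hSrange, hSrange, Finset.sum_range_succ']
    have h0 : j + 1 - ((1 + 0 : ℕ) : Fin (g + 1)) = j := by
      push_cast; ring
    have hl : ∀ l : ℕ, j + 1 - ((1 + (l + 1) : ℕ) : Fin (g + 1)) = j - ((1 + l : ℕ) : Fin (g + 1)) := by
      intro l; push_cast; ring
    rw [h0]
    rw [Finset.sum_congr rfl (fun l _ => by rw [hl l])]
    ring
  -- the full-period sum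
  have hSfull : ∀ j : Fin (g + 1), S j g = (∑ x, d x) - d j := by
    intro j
    have h1 : (∑ x : Fin (g + 1), d (j - x)) = ∑ x, d x := Equiv.sum_comp (Equiv.subLeft j) d
    have h2 : (∑ x : Fin (g + 1), d (j - x))
        = ∑ l ∈ Finset.range (g + 1), d (j - ((l : ℕ) : Fin (g + 1))) := by
      rw [← Fin.sum_univ_eq_sum_range (fun l => d (j - ((l : ℕ) : Fin (g + 1)))) (g + 1)]
      exact Finset.sum_congr rfl fun x _ => by rw [Fin.cast_val_eq_self]
    rw [Finset.sum_range_succ'] at h2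
    have h3 : ∀ l : ℕ, ((l + 1 : ℕ) : Fin (g + 1)) = ((1 + l : ℕ) : Fin (g + 1)) := by
      intro l; push_cast; ring
    simp only [Nat.cast_zero, sub_zero] at h2
    rw [hSrange]
    have h4 : (∑ l ∈ Finset.range g, d (j - ((1 + l : ℕ) : Fin (g + 1))))
        = ∑ l ∈ Finset.range g, d (j - ((l + 1 : ℕ) : Fin (g + 1))) :=
      Finset.sum_congr rfl fun l _ => by rw [h3 l]
    rw [h4, ← h1, h2]
    ring
  -- rewrite udX as sup' of S
  have hX : ∀ j, udX g J W j
      = (Finset.range (g + 1)).sup' ⟨0, Finset.mem_range.mpr (Nat.succ_pos g)⟩ (S j) := fun j => rfl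
  have hne : (Finset.range g).Nonempty := ⟨0, Finset.mem_range.mpr hg⟩
  set M : ℝ := (Finset.range g).sup' hne (S i) with hM
  -- top peel for X i
  have hXi : udX g J W i = max (S i g) M := by
    rw [hX, sup'_range_succ_top g hg, hM]
  -- bottom peel for X (i+1)
  have hXi1 : udX g J W (i + 1) = max 0 (d i + M) := by
    rw [hX, sup'_range_succ_bot g hg]
    have hS0 : S (i + 1) 0 = 0 := by rw [hSrange]; simp
    have : ((Finset.range g).sup' ⟨0, Finset.mem_range.mpr hg⟩ fun k => S (i + 1) (k + 1))
        = (Finset.range g).sup' hne fun k => d i + S i k := by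
      exact Finset.sup'_congr _ rfl fun k _ => hSstep i k
    rw [hS0, this, add_sup'_real hne (S i) (d i), hM]
  rw [hXi1, hXi, hSfull i]
  have hdi : d i = J i - W i := rfl
  rw [← hdi]
  rcases le_total M ((∑ x, d x) - d i) with hc | hc <;>
    [rw [max_eq_left hc]; rw [max_eq_right hc]] <;>
  · rcases le_total 0 (d i + M) with hc2 | hc2 <;>
      simp [max_def] <;> split_ifs <;> linarith

/-- The total number of balls `C_0 = Σ J_i` is conserved under the UD-pTL. -/
theorem udpToda_sum_J_conserved (g : ℕ) (hg : 1 ≤ g) (J W : Fin (g + 1) → ℝ)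
    (h : ∑ i, J i < ∑ i, W i) :
    ∑ i, udJbar g J W i = ∑ i, J i := by
  have key : ∀ i, udJbar g J W i = J i + udX g J W i - udX g J W (i + 1) := by
    intro i
    rw [udJbar, udX_succ g hg J W h i]
    rcases le_total (W i) (udX g J W i + J i) with hc | hc
    · rw [min_eq_left hc, max_eq_right (by linarith)]; ring
    · rw [min_eq_right hc, max_eq_left (by linarith)]; ring
  have hshift : (∑ i, udX g J W (i + 1)) = ∑ i, udX g J W i :=
    Equiv.sum_comp (Equiv.addRight (1 : Fin (g + 1))) (udX g J W)
  calc ∑ i, udJbar g J W i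
      = ∑ i, (J i + udX g J W i - udX g J W (i + 1)) := Finset.sum_congr rfl fun i _ => key i
    _ = (∑ i, (J i + udX g J W i)) - ∑ i, udX g J W (i + 1) := Finset.sum_sub_distrib _ _
    _ = (∑ i, J i) + (∑ i, udX g J W i) - ∑ i, udX g J W i := by
        rw [Finset.sum_add_distrib, hshift]
    _ = ∑ i, J i := by ring
end

section
/- The UD-pTL map ζ preserves the phase space 𝒯 = {(J,W) ∈ ℝ^{2g+2} : Σ_{i=1}^{g+1} J_i < Σ_{i=1}^{g+1} W_i}: if Σ J_i < Σ W_i, then Σ_{i=1}^{g+1} W̄_i = Σ_{i=1}^{g+1} W_i and Σ_{i=1}^{g+1} J̄_i = Σ_{i=1}^{g+1} J_i, hence Σ J̄_i < Σ W̄_i; in particular the quantity C_{−1} := Σ_{i=1}^{g+1} (J_i + W_i) satisfies Σ_i (J̄_i + W̄_i) = Σ_i (J_i + W_i). -/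
section aux

open Fin.NatCast

variable (g : ℕ) (J W : Fin (g + 1) → ℝ)

/-- partial sum -/
noncomputable def udS (i : Fin (g + 1)) (k : ℕ) : ℝ :=
  ∑ l ∈ Finset.Icc 1 k, (J (i - (l : Fin (g + 1))) - W (i - (l : Fin (g + 1))))

lemma udS_full (i : Fin (g + 1)) : udS g J W i (g + 1) = ∑ j, (J j - W j) := by
  unfold udS
  rw [← Finset.map_add_right_Icc 0 g 1, Finset.sum_map]
  simp only [Function.Embedding.coeFn_mk, addRightEmbedding_apply]
  have h0 : Finset.Icc 0 g = Finset.range (g+1) := by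
    ext x; simp [Nat.lt_succ_iff]
  rw [h0, ← Fin.sum_univ_eq_sum_range (fun l =>
      (J (i - ((l + 1 : ℕ) : Fin (g + 1))) - W (i - ((l + 1 : ℕ) : Fin (g + 1)))))]
  apply Fintype.sum_equiv (Equiv.subLeft (i - 1))
  intro x
  have : (((x : ℕ) + 1 : ℕ) : Fin (g+1)) = x + 1 := by push_cast [Fin.cast_val_eq_self]; ring
  rw [this]
  have : i - (x + 1) = Equiv.subLeft (i - 1) x := by
    simp [Equiv.subLeft]; abel
  rw [this]

lemma udS_succ (i : Fin (g + 1)) (k : ℕ) :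
    udS g J W (i + 1) (k + 1) = (J i - W i) + udS g J W i k := by
  unfold udS
  rw [← Finset.map_add_right_Icc 0 k 1, Finset.sum_map]
  simp only [Function.Embedding.coeFn_mk, addRightEmbedding_apply]
  have h0 : Finset.Icc 0 k = insert 0 (Finset.Icc 1 k) := by
    ext x; simp; omega
  rw [h0, Finset.sum_insert (by simp)]
  congr 1
  · norm_num
  · apply Finset.sum_congr rfl
    intro l _
    have : ((l + 1 : ℕ) : Fin (g+1)) = (l : Fin (g+1)) + 1 := by push_cast; ring
    rw [this]
    congr 2 <;> abel

lemma udS_periodic (i : Fin (g + 1)) (k : ℕ) :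
    udS g J W i (k + (g + 1)) = (∑ j, (J j - W j)) + udS g J W i k := by
  unfold udS
  rw [show k + (g+1) = (g+1) + k by ring]
  have h00 : Finset.Icc 1 (g+1+k) = Finset.Ioc 0 (g+1+k) := by ext x; simp; omega
  rw [h00]
  rw [← Finset.sum_Ioc_consecutive _ (by omega : 0 ≤ g+1) (by omega : g+1 ≤ g+1+k)]
  have h1 : Finset.Ioc 0 (g+1) = Finset.Icc 1 (g+1) := by ext x; simp; omega
  have h2 : Finset.Ioc (g+1) (g+1+k) = Finset.Icc (1 + (g+1)) (k + (g+1)) := by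
    ext x; simp; omega
  rw [h1, h2, ← Finset.map_add_right_Icc 1 k (g+1), Finset.sum_map]
  have := udS_full g J W i
  unfold udS at this
  rw [this]
  congr 1
  apply Finset.sum_congr rfl
  intro l _
  simp only [Function.Embedding.coeFn_mk, addRightEmbedding_apply]
  have : ((l + (g + 1) : ℕ) : Fin (g+1)) = (l : Fin (g+1)) := by
    rw [Nat.cast_add, Fin.natCast_self, add_zero]
  rw [this]

/-- extended max -/
noncomputable def udXn (n : ℕ) (i : Fin (g + 1)) : ℝ :=
  (Finset.range (n + 1)).sup' ⟨0, Finset.mem_range.mpr (Nat.succ_pos n)⟩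
    (fun k => udS g J W i k)

lemma udX_eq_udXn (i : Fin (g + 1)) : udX g J W i = udXn g J W g i := rfl

lemma udXn_stable (hT : (∑ j, (J j - W j)) < 0) (i : Fin (g + 1)) :
    ∀ n, g ≤ n → udXn g J W n i = udXn g J W g i := by
  intro n hn
  induction n with
  | zero => obtain rfl := Nat.le_zero.mp hn; rfl
  | succ m ih =>
    rcases Nat.lt_or_ge m g with hm | hm
    · obtain rfl : m + 1 = g := by omega
      rfl
    · rw [← ih hm]
      unfold udXn
      apply le_antisymm
      · apply Finset.sup'_le
        intro k hk
        rcases Nat.lt_or_ge k (m+1) with hk2 | hk2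
        · exact Finset.le_sup' _ (Finset.mem_range.mpr hk2)
        · have hkk : k = (k - (g+1)) + (g+1) := by
            simp only [Finset.mem_range] at hk; omega
          rw [hkk, udS_periodic]
          have hle : udS g J W i (k - (g+1)) ≤ (Finset.range (m+1)).sup'
              ⟨0, Finset.mem_range.mpr (Nat.succ_pos m)⟩ (fun k => udS g J W i k) := by
            apply Finset.le_sup'
            simp only [Finset.mem_range] at hk ⊢; omega
          linarith
      · apply Finset.sup'_mono
        intro x hx
        simp only [Finset.mem_range] at hx ⊢; omega

lemma udX_shift (hT : (∑ j, (J j - W j)) < 0) (i : Fin (g + 1)) :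
    udX g J W (i + 1) = max 0 (J i - W i + udX g J W i) := by
  rw [udX_eq_udXn, ← udXn_stable g J W hT (i+1) (g+1) (by omega)]
  apply le_antisymm
  · apply Finset.sup'_le
    intro k hk
    rcases k with _ | m
    · simp [udS]
    · rw [udS_succ]
      have : udS g J W i m ≤ udX g J W i :=
        Finset.le_sup' _ (Finset.mem_range.mpr (by simp at hk; omega))
      have := le_max_right (0:ℝ) (J i - W i + udX g J W i)
      simp only [le_max_iff]; right; linarith
  · rw [max_le_iff]
    constructor
    · have : udS g J W (i+1) 0 ≤ udXn g J W (g+1) (i+1) :=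
        Finset.le_sup' _ (Finset.mem_range.mpr (by omega))
      simpa [udS] using this
    · obtain ⟨m, hm, hms⟩ := Finset.exists_mem_eq_sup'
        (⟨0, Finset.mem_range.mpr (Nat.succ_pos g)⟩ :
          (Finset.range (g+1)).Nonempty) (fun k => udS g J W i k)
      rw [udX_eq_udXn, udXn, hms]
      rw [← udS_succ]
      exact Finset.le_sup' _ (Finset.mem_range.mpr (by simp at hm; omega))

lemma udJbar_eq (hT : (∑ j, (J j - W j)) < 0) (i : Fin (g + 1)) :
    udJbar g J W i = J i + udX g J W i - udX g J W (i + 1) := by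
  rw [udX_shift g J W hT i, udJbar]
  rcases le_total (0:ℝ) (J i - W i + udX g J W i) with hc | hc
  · rw [max_eq_right hc, min_eq_left (by linarith)]; ring
  · rw [max_eq_left hc, min_eq_right (by linarith)]; ring

end aux

/-- The UD-pTL map preserves the phase space `Σ J_i < Σ W_i`:
both `Σ J_i` and `Σ W_i` are conserved, hence `Σ J̄_i < Σ W̄_i`;
in particular `C_{-1} = Σ (J_i + W_i)` is conserved. -/
theorem udpToda_preserves_phase_space (g : ℕ) (hg : 1 ≤ g) (J W : Fin (g + 1) → ℝ)
    (h : ∑ i, J i < ∑ i, W i) :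
    (∑ i, udWbar g J W i = ∑ i, W i) ∧
    (∑ i, udJbar g J W i = ∑ i, J i) ∧
    (∑ i, udJbar g J W i < ∑ i, udWbar g J W i) ∧
    (∑ i, (udJbar g J W i + udWbar g J W i) = ∑ i, (J i + W i)) := by
  have hT : (∑ j, (J j - W j)) < 0 := by
    rw [Finset.sum_sub_distrib]; linarith
  have hJ : ∑ i, udJbar g J W i = ∑ i, J i := by
    have e1 : ∀ i, udJbar g J W i = J i + udX g J W i - udX g J W (i + 1) :=
      udJbar_eq g J W hT
    rw [Finset.sum_congr rfl (fun i _ => e1 i)]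
    have e2 : ∑ i, udX g J W (i + 1) = ∑ i, udX g J W i :=
      Fintype.sum_equiv (Equiv.addRight 1) _ _ (fun i => rfl)
    rw [Finset.sum_sub_distrib, Finset.sum_add_distrib, e2]
    ring
  have hshift : ∑ i : Fin (g+1), J (i + 1) = ∑ i, J i :=
    Fintype.sum_equiv (Equiv.addRight 1) _ _ (fun i => rfl)
  have hW : ∑ i, udWbar g J W i = ∑ i, W i := by
    unfold udWbar
    rw [Finset.sum_sub_distrib, Finset.sum_add_distrib, hshift, hJ]
    ring
  refine ⟨hW, hJ, by rw [hJ, hW]; exact h, by rw [Finset.sum_add_distrib, hJ, hW, Finset.sum_add_distrib]⟩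
end

section
/- The periodic box-ball system is well defined: if all J_1,…,J_{g+1}, W_1,…,W_{g+1} are positive integers and Σ_{i=1}^{g+1} J_i < Σ_{i=1}^{g+1} W_i, then all J̄_1,…,J̄_{g+1}, W̄_1,…,W̄_{g+1} are again positive integers. -/
/-- The periodic box-ball system is well defined: if all `J_i`, `W_i` are
positive integers, then so are all `J̄_i`, `W̄_i`. -/
theorem pBBS_well_defined (g : ℕ) (hg : 1 ≤ g) (J W : Fin (g + 1) → ℝ)
    (hJ : ∀ i, ∃ n : ℤ, 0 < n ∧ J i = n) (hW : ∀ i, ∃ n : ℤ, 0 < n ∧ W i = n)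
    (h : ∑ i, J i < ∑ i, W i) :
    (∀ i, ∃ n : ℤ, 0 < n ∧ udJbar g J W i = n) ∧
    (∀ i, ∃ n : ℤ, 0 < n ∧ udWbar g J W i = n) := by
  choose nJ hnJpos hnJ using hJ
  choose nW hnWpos hnW using hW
  -- X_i is a nonnegative integer
  open Fin.NatCast in
  have hX : ∀ i : Fin (g + 1), ∃ m : ℤ, 0 ≤ m ∧ udX g J W i = m := by
    intro i
    have hX0 : (0 : ℝ) ≤ udX g J W i := by
      rw [udX]
      refine le_trans ?_ (Finset.le_sup' _ (Finset.mem_range.mpr (Nat.succ_pos g)))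
      simp
    obtain ⟨k, hk, hks⟩ := Finset.exists_mem_eq_sup' (s := Finset.range (g + 1))
      ⟨0, Finset.mem_range.mpr (Nat.succ_pos g)⟩
      (fun k => ∑ l ∈ Finset.Icc 1 k, (J (i - (l : Fin (g + 1))) - W (i - (l : Fin (g + 1)))))
    refine ⟨∑ l ∈ Finset.Icc 1 k, (nJ (i - (l : Fin (g + 1))) - nW (i - (l : Fin (g + 1)))), ?_, ?_⟩
    · have heq : udX g J W i = ((∑ l ∈ Finset.Icc 1 k,
          (nJ (i - (l : Fin (g + 1))) - nW (i - (l : Fin (g + 1)))) : ℤ) : ℝ) := by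
        rw [udX, hks]
        push_cast
        simp [hnJ, hnW]
      rw [heq] at hX0
      exact_mod_cast hX0
    · rw [udX, hks]
      push_cast
      simp [hnJ, hnW]
  constructor
  · intro i
    obtain ⟨m, hm0, hmX⟩ := hX i
    refine ⟨min (nW i) (m + nJ i), ?_, ?_⟩
    · exact lt_min (hnWpos i) (by linarith [hnJpos i])
    · rw [udJbar, hmX, hnJ, hnW]
      push_cast
      ring_nf
  · intro i
    obtain ⟨m, hm0, hmX⟩ := hX i
    refine ⟨nJ (i + 1) + nW i - min (nW i) (m + nJ i), ?_, ?_⟩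
    · have hmin : min (nW i) (m + nJ i) ≤ nW i := min_le_left _ _
      have := hnJpos (i + 1)
      omega
    · rw [udWbar, udJbar, hmX, hnJ, hnW, hnJ]
      push_cast
      ring_nf
end

section
/- Let s be a finite nonempty index set, and for each i ∈ s let a_i ∈ ℝ² and b_i ∈ ℝ. Define F : ℝ² → ℝ by F(p) = min_{i∈s} (⟨a_i, p⟩ + b_i). Then F is differentiable at a point p ∈ ℝ² if and only if all indices attaining the minimum at p have the same linear part; i.e., if and only if a_i = a_j whenever i, j ∈ s satisfy ⟨a_i,p⟩ + b_i = F(p) = ⟨a_j,p⟩ + b_j. -/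
open Filter

/-- A min-plus (tropical) affine function `F(p) = min_{i ∈ s} (⟨a_i, p⟩ + b_i)`
on `ℝ²` is differentiable at `p` if and only if all indices attaining the
minimum at `p` have the same linear part `a_i`. -/
theorem minplus_differentiableAt_iff {ι : Type*} (s : Finset ι) (hs : s.Nonempty)
    (a : ι → EuclideanSpace ℝ (Fin 2)) (b : ι → ℝ) (p : EuclideanSpace ℝ (Fin 2)) :
    DifferentiableAt ℝ
        (fun q : EuclideanSpace ℝ (Fin 2) =>
          s.inf' hs fun i => (inner ℝ (a i) q : ℝ) + b i) p ↔
      ∀ i ∈ s, ∀ j ∈ s,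
        (inner ℝ (a i) p : ℝ) + b i = (s.inf' hs fun k => (inner ℝ (a k) p : ℝ) + b k) →
        (inner ℝ (a j) p : ℝ) + b j = (s.inf' hs fun k => (inner ℝ (a k) p : ℝ) + b k) →
        a i = a j := by
  set F : EuclideanSpace ℝ (Fin 2) → ℝ :=
    fun q => s.inf' hs fun i => (inner ℝ (a i) q : ℝ) + b i with hF
  constructor
  · intro hd i hi j hj hie hje
    have key : ∀ k ∈ s, (inner ℝ (a k) p : ℝ) + b k = F p →
        fderiv ℝ F p = innerSL ℝ (a k) := by
      intro k hk hke
      have hFle : ∀ q, F q ≤ (inner ℝ (a k) q : ℝ) + b k := fun q =>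
        Finset.inf'_le _ hk
      have hLd : HasFDerivAt (fun q : EuclideanSpace ℝ (Fin 2) => (inner ℝ (a k) q : ℝ) + b k)
          (innerSL ℝ (a k)) p := ((innerSL ℝ (a k)).hasFDerivAt).add_const _
      have hg : IsLocalMin (fun q => ((inner ℝ (a k) q : ℝ) + b k) - F q) p := by
        apply Filter.Eventually.of_forall
        intro q
        have h1 : (0 : ℝ) ≤ ((inner ℝ (a k) q : ℝ) + b k) - F q := sub_nonneg.mpr (hFle q)
        have h2 : ((inner ℝ (a k) p : ℝ) + b k) - F p = 0 := by rw [hke]; ring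
        simp only [h2]
        exact h1
      have h0 : fderiv ℝ (fun q => ((inner ℝ (a k) q : ℝ) + b k) - F q) p = 0 :=
        hg.fderiv_eq_zero
      have hsub : fderiv ℝ (fun q => ((inner ℝ (a k) q : ℝ) + b k) - F q) p
          = innerSL ℝ (a k) - fderiv ℝ F p := by
        rw [fderiv_fun_sub hLd.differentiableAt hd, hLd.fderiv]
      rw [hsub] at h0
      exact (sub_eq_zero.mp h0).symm
    have hij : (innerSL ℝ (a i) : EuclideanSpace ℝ (Fin 2) →L[ℝ] ℝ) = innerSL ℝ (a j) := by
      rw [← key i hi hie, ← key j hj hje]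
    apply ext_inner_right ℝ
    intro v
    have := congrArg (fun L : EuclideanSpace ℝ (Fin 2) →L[ℝ] ℝ => L v) hij
    simpa using this
  · intro h
    obtain ⟨i₀, hi₀, hmin⟩ := Finset.exists_mem_eq_inf' hs
      fun i => (inner ℝ (a i) p : ℝ) + b i
    set L : EuclideanSpace ℝ (Fin 2) → ℝ := fun q => (inner ℝ (a i₀) q : ℝ) + b i₀ with hL
    have hev : ∀ i ∈ s, ∀ᶠ q in nhds p, L q ≤ (inner ℝ (a i) q : ℝ) + b i := by
      intro i hi
      rcases eq_or_lt_of_le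
        (Finset.inf'_le (fun k => (inner ℝ (a k) p : ℝ) + b k) hi) with heq | hlt
      · have ha : a i = a i₀ := h i hi i₀ hi₀ heq.symm hmin.symm
        have hb : b i = b i₀ := by
          have h2 : (inner ℝ (a i) p : ℝ) + b i = (inner ℝ (a i₀) p : ℝ) + b i₀ :=
            heq.symm.trans hmin
          rw [ha] at h2
          linarith
        filter_upwards with q
        rw [hL]
        simp only [ha, hb]
        exact le_refl _
      · have hc1 : ContinuousAt L p := by
          apply Continuous.continuousAt
          exact (Continuous.inner continuous_const continuous_id).add continuous_const
        have hc2 : ContinuousAt (fun q => (inner ℝ (a i) q : ℝ) + b i) p := by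
          apply Continuous.continuousAt
          exact (Continuous.inner continuous_const continuous_id).add continuous_const
        have hlt' : L p < (inner ℝ (a i) p : ℝ) + b i := by
          show (inner ℝ (a i₀) p : ℝ) + b i₀ < (inner ℝ (a i) p : ℝ) + b i
          rw [← hmin]; exact hlt
        exact (hc1.eventually_lt hc2 hlt').mono fun q hq => hq.le
    have heqF : F =ᶠ[nhds p] L := by
      have hall : ∀ᶠ q in nhds p, ∀ i ∈ s, L q ≤ (inner ℝ (a i) q : ℝ) + b i :=
        (Filter.eventually_all_finset s).2 hev
      filter_upwards [hall] with q hq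
      apply le_antisymm
      · exact Finset.inf'_le _ hi₀
      · exact Finset.le_inf' _ _ hq
    have hLd : DifferentiableAt ℝ L p :=
      ((innerSL ℝ (a i₀)).differentiableAt).add_const (b i₀)
    exact hLd.congr_of_eventuallyEq heqF
end
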